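/- Equilibrated MLMC error bound reduces to a zeta-function sum: for s₀ > 0, κ > 0, ε > 0, mesh widths h_j = 2^{−j} h₀ and sample numbers M₀ = ⌈h_J^{−2s₀} κ⌉, M_j = ⌈(h_{j−1}/h_J)^{2s₀} j^{1+ε} κ⌉, one has (1/M₀) + Σ_{j=1}^J (h_{j−1}^{2s₀}/M_j) + h_J^{2s₀} ≤ (1 + ζ(1+ε)/κ + 1/κ) · h_J^{2s₀}, where ζ is the Riemann zeta function. -/

import Mathlib

open scoped BigOperators

/-- Equilibrated MLMC error bound via a zeta-function sum: with mesh widths `h_j = 2^{−j}h₀`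
and sample numbers `M₀ = ⌈h_J^{−2s₀}κ⌉`, `M_j = ⌈(h_{j−1}/h_J)^{2s₀} j^{1+ε} κ⌉`,
`(1/M₀) + ∑_{j=1}^J h_{j−1}^{2s₀}/M_j + h_J^{2s₀} ≤ (1 + ζ(1+ε)/κ + 1/κ) h_J^{2s₀}`,
where `ζ(1+ε) = ∑_{n≥1} n^{−(1+ε)}`. -/
theorem mlmc_equilibrated_error_bound
    (J : ℕ) (h₀ s₀ ε κ : ℝ) (hh₀ : 0 < h₀) (hs₀ : 0 < s₀) (hε : 0 < ε) (hκ : 0 < κ) :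
    let h : ℕ → ℝ := fun j => (2 : ℝ) ^ (-(j : ℝ)) * h₀
    let M : ℕ → ℕ := fun j =>
      if j = 0 then ⌈(h J) ^ (-(2 * s₀)) * κ⌉₊
      else ⌈(h (j - 1) / h J) ^ (2 * s₀) * (j : ℝ) ^ (1 + ε) * κ⌉₊
    1 / (M 0 : ℝ) + (∑ j ∈ Finset.Icc 1 J, (h (j - 1)) ^ (2 * s₀) / (M j : ℝ))
        + (h J) ^ (2 * s₀)
      ≤ (1 + (∑' n : ℕ, ((n : ℝ) + 1) ^ (-(1 + ε))) / κ + 1 / κ) * (h J) ^ (2 * s₀) := by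
  intro h M
  have hpos : ∀ j, 0 < h j := fun j => mul_pos (Real.rpow_pos_of_pos two_pos _) hh₀
  set A := (h J) ^ (2 * s₀) with hA
  have hApos : 0 < A := Real.rpow_pos_of_pos (hpos J) _
  set Z := ∑' n : ℕ, ((n : ℝ) + 1) ^ (-(1 + ε)) with hZ
  -- bound on the first term
  have hM0 : (h J) ^ (-(2 * s₀)) * κ ≤ (M 0 : ℝ) := by
    simp only [M, if_pos rfl]; exact Nat.le_ceil _
  have hval0 : 0 < (h J) ^ (-(2 * s₀)) * κ :=
    mul_pos (Real.rpow_pos_of_pos (hpos J) _) hκ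
  have h1 : 1 / (M 0 : ℝ) ≤ A / κ := by
    calc 1 / (M 0 : ℝ) ≤ 1 / ((h J) ^ (-(2 * s₀)) * κ) :=
          one_div_le_one_div_of_le hval0 hM0
      _ = A / κ := by
          rw [Real.rpow_neg (hpos J).le]
          field_simp
          exact hA.symm
  -- termwise bound
  have hterm : ∀ j ∈ Finset.Icc 1 J,
      (h (j - 1)) ^ (2 * s₀) / (M j : ℝ) ≤ A * (j : ℝ) ^ (-(1 + ε)) / κ := by
    intro j hj
    obtain ⟨hj1, hjJ⟩ := Finset.mem_Icc.mp hj
    have hjne : j ≠ 0 := by omega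
    have hjpos : (0 : ℝ) < j := by exact_mod_cast Nat.pos_of_ne_zero hjne
    have hMj : (h (j - 1) / h J) ^ (2 * s₀) * (j : ℝ) ^ (1 + ε) * κ ≤ (M j : ℝ) := by
      simp only [M, if_neg hjne]; exact Nat.le_ceil _
    have hvpos : 0 < (h (j - 1) / h J) ^ (2 * s₀) * (j : ℝ) ^ (1 + ε) * κ := by
      have := Real.rpow_pos_of_pos (div_pos (hpos (j - 1)) (hpos J)) (2 * s₀)
      have := Real.rpow_pos_of_pos hjpos (1 + ε)
      positivity
    calc (h (j - 1)) ^ (2 * s₀) / (M j : ℝ)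
        ≤ (h (j - 1)) ^ (2 * s₀) /
            ((h (j - 1) / h J) ^ (2 * s₀) * (j : ℝ) ^ (1 + ε) * κ) := by
          gcongr
      _ = A * (j : ℝ) ^ (-(1 + ε)) / κ := by
          rw [Real.div_rpow (hpos _).le (hpos J).le, Real.rpow_neg hjpos.le]
          have e1 : (h (j - 1)) ^ (2 * s₀) ≠ 0 :=
            (Real.rpow_pos_of_pos (hpos _) _).ne'
          have e2 : ((j : ℝ)) ^ (1 + ε) ≠ 0 :=
            (Real.rpow_pos_of_pos hjpos _).ne'
          field_simp
          rw [hA]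
  -- summability and zeta bound
  have hsummable : Summable (fun n : ℕ => ((n : ℝ) + 1) ^ (-(1 + ε))) := by
    have hs : Summable (fun n : ℕ => (n : ℝ) ^ (-(1 + ε))) :=
      Real.summable_nat_rpow.mpr (by linarith)
    exact ((summable_nat_add_iff 1).mpr hs).congr (fun n => by push_cast; ring_nf)
  have hre : ∑ j ∈ Finset.Icc 1 J, (j : ℝ) ^ (-(1 + ε))
      = ∑ n ∈ Finset.range J, ((n : ℝ) + 1) ^ (-(1 + ε)) := by
    rw [← Finset.Ico_add_one_right_eq_Icc, Finset.sum_Ico_eq_sum_range]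
    simp only [Nat.add_sub_cancel]
    exact Finset.sum_congr rfl fun n _ => by push_cast; ring_nf
  have hZnn : ∑ j ∈ Finset.Icc 1 J, (j : ℝ) ^ (-(1 + ε)) ≤ Z := by
    rw [hre]
    exact Summable.sum_le_tsum (Finset.range J)
      (fun n _ => Real.rpow_nonneg (by positivity) _) hsummable
  have hS : ∑ j ∈ Finset.Icc 1 J, (h (j - 1)) ^ (2 * s₀) / (M j : ℝ) ≤ A / κ * Z := by
    calc ∑ j ∈ Finset.Icc 1 J, (h (j - 1)) ^ (2 * s₀) / (M j : ℝ)
        ≤ ∑ j ∈ Finset.Icc 1 J, A * (j : ℝ) ^ (-(1 + ε)) / κ :=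
          Finset.sum_le_sum hterm
      _ = A / κ * ∑ j ∈ Finset.Icc 1 J, (j : ℝ) ^ (-(1 + ε)) := by
          rw [Finset.mul_sum]
          exact Finset.sum_congr rfl fun j _ => by ring
      _ ≤ A / κ * Z := by
          have : 0 ≤ A / κ := by positivity
          exact mul_le_mul_of_nonneg_left hZnn this
  have hrhs : (1 + Z / κ + 1 / κ) * A = A + A / κ * Z + A / κ := by ring
  linarith
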